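/- For any circle graph G, ψ(G) ≥ an(G), where an(G) is the asteroidal number of G. -/

import Mathlib

open SimpleGraph

/-- The circle on which chord diagrams live (the unit circle as an additive circle). -/
abbrev Circ : Type := AddCircle (1 : ℝ)

/-- A circle representation of a graph `G`: each vertex `v` gets a chord with
distinct endpoints `p v` and `q v`, all `2|V|` endpoints are distinct, and two
distinct vertices are adjacent iff their chords cross (i.e. exactly one endpoint
of one chord lies strictly inside an arc determined by the other chord). -/
structure CircleRep (V : Type) (G : SimpleGraph V) where
  p : V → Circ
  q : V → Circ
  inj : Function.Injective (Sum.elim p q)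
  adj : ∀ u v : V, G.Adj u v ↔ u ≠ v ∧
    Xor' (sbtw (p v) (p u) (q v)) (sbtw (p v) (q u) (q v))

namespace CircleRep

variable {V : Type} {G : SimpleGraph V} (R : CircleRep V G)

/-- The two open arcs of the chord of `v`: `b = true` is the arc from `p v`
clockwise to `q v`, `b = false` is the other arc. -/
def ArcSet (v : V) (b : Bool) : Set Circ :=
  if b then {x | sbtw (R.p v) x (R.q v)} else {x | sbtw (R.q v) x (R.p v)}

/-- The arc `b` of the chord of `v` is empty: it contains both endpoints of no chord. -/
def ArcEmpty (v : V) (b : Bool) : Prop :=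
  ∀ u : V, ¬ (R.p u ∈ R.ArcSet v b ∧ R.q u ∈ R.ArcSet v b)

/-- A chord is peripheral if one of its arcs is empty. -/
def Peripheral (v : V) : Prop := ∃ b : Bool, R.ArcEmpty v b

/-- A set `T` of corner points satisfies the chord of `v` if each of the two
arcs of the chord contains a corner. -/
def SatChord (T : Finset Circ) (v : V) : Prop :=
  (∃ t ∈ T, t ∈ R.ArcSet v true) ∧ (∃ t ∈ T, t ∈ R.ArcSet v false)

/-- `T` is a satisfying set of corners: the corners are distinct from all chord
endpoints and every chord has a corner in each of its arcs. -/
def GoodCorners (T : Finset Circ) : Prop :=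
  (∀ t ∈ T, ∀ v : V, t ≠ R.p v ∧ t ≠ R.q v) ∧ ∀ v : V, R.SatChord T v

/-- The polygon number `ψ_r` of a circle representation: the minimum number of
corners that must be added to satisfy all chords. -/
noncomputable def polyNum : ℕ :=
  sInf {k | ∃ T : Finset Circ, T.card = k ∧ R.GoodCorners T}

/-- `c 0, …, c (ℓ-1)` is an ℓ-independent set in series: there is a point `x`
on the circle such that a clockwise traversal starting at `x` encounters both
endpoints of `c i` before both endpoints of `c j` whenever `i < j`. -/
def SeriesIndep {ℓ : ℕ} (c : Fin ℓ → V) : Prop :=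
  Function.Injective c ∧ ∃ x : Circ,
    (∀ i : Fin ℓ, x ≠ R.p (c i) ∧ x ≠ R.q (c i)) ∧
    ∀ i j : Fin ℓ, i < j →
      ∀ e ∈ ({R.p (c i), R.q (c i)} : Set Circ),
        ∀ f ∈ ({R.p (c j), R.q (c j)} : Set Circ), sbtw x e f

end CircleRep

/-- The polygon number `ψ(G)`: the minimum `k` such that `G` has a circle
representation together with `k` corners satisfying all chords. -/
noncomputable def polygonNumber {V : Type} (G : SimpleGraph V) : ℕ :=
  sInf {k | ∃ R : CircleRep V G, ∃ T : Finset Circ, T.card = k ∧ R.GoodCorners T}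

/-- A permutation graph: a graph having a circle representation admitting two
corner points such that each chord has one corner in each of its arcs. -/
def IsPermutationGraph {V : Type} (G : SimpleGraph V) : Prop :=
  ∃ R : CircleRep V G, ∃ T : Finset Circ, T.card = 2 ∧ R.GoodCorners T

/-- The clique cover number `κ(G)`: least `n` such that the vertex set can be
partitioned into `n` cliques. -/
noncomputable def cliqueCoverNumber {V : Type} (G : SimpleGraph V) : ℕ :=
  sInf {n | ∃ f : V → Fin n, ∀ u v : V, f u = f v → u = v ∨ G.Adj u v}

/-- The independence number `α(G)`. -/
noncomputable def indepNumber {V : Type} (G : SimpleGraph V) : ℕ :=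
  sSup {n | ∃ s : Finset V, (∀ u ∈ s, ∀ v ∈ s, u ≠ v → ¬ G.Adj u v) ∧ s.card = n}

/-- `A` is an asteroidal set of `G`: for every `a ∈ A`, any two vertices of
`A \ {a}` are connected by a path in `G - N[a]`. -/
def IsAsteroidal {V : Type} (G : SimpleGraph V) (A : Set V) : Prop :=
  ∀ a ∈ A, ∀ x ∈ A, ∀ y ∈ A, x ≠ a → y ≠ a →
    ∃ (hx : x ∈ {w | w ≠ a ∧ ¬ G.Adj a w}) (hy : y ∈ {w | w ≠ a ∧ ¬ G.Adj a w}),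
      (G.induce {w | w ≠ a ∧ ¬ G.Adj a w}).Reachable ⟨x, hx⟩ ⟨y, hy⟩

/-- The asteroidal number `an(G)`: maximum size of an asteroidal set. -/
noncomputable def asteroidalNumber {V : Type} (G : SimpleGraph V) : ℕ :=
  sSup {n | ∃ A : Finset V, IsAsteroidal G ↑A ∧ A.card = n}

/-- `G` is AT-free: it has no asteroidal triple. -/
def ATFree {V : Type} (G : SimpleGraph V) : Prop :=
  ¬ ∃ a b c : V, a ≠ b ∧ a ≠ c ∧ b ≠ c ∧ IsAsteroidal G {a, b, c}

/-- `G` is distance hereditary: in every connected induced subgraph, distances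
agree with those of `G`. -/
def DistanceHereditary {V : Type} (G : SimpleGraph V) : Prop :=
  ∀ s : Set V, (G.induce s).Connected →
    ∀ u v : ↥s, (G.induce s).dist u v = G.dist (u : V) (v : V)

/-- `{V1, V2}` is a split of `G`. -/
def IsSplit {V : Type} (G : SimpleGraph V) (V1 V2 : Set V) : Prop :=
  V1 ∪ V2 = Set.univ ∧ Disjoint V1 V2 ∧ 1 < V1.ncard ∧ 1 < V2.ncard ∧
    ∀ x ∈ V1, ∀ y ∈ V2,
      (G.Adj x y ↔ (∃ y' ∈ V2, G.Adj x y') ∧ (∃ x' ∈ V1, G.Adj x' y))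


/-! ### Auxiliary machinery for `stmt11` -/

set_option maxHeartbeats 4000000

section AuxCirc

/-- Canonical representative of a point of the circle in `[0,1)`. -/
noncomputable def cpos (x : Circ) : ℝ :=
  ((QuotientAddGroup.equivIcoMod (one_pos) (0:ℝ) x : Set.Ico (0:ℝ) (0+1)) : ℝ)

lemma cpos_coe_eq (x : Circ) : ((cpos x : ℝ) : Circ) = x := by
  have := (QuotientAddGroup.equivIcoMod (one_pos) (0:ℝ)).symm_apply_apply x
  simpa [QuotientAddGroup.equivIcoMod, cpos] using this

lemma cpos_mem (x : Circ) : cpos x ∈ Set.Ico (0:ℝ) 1 := by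
  have := (QuotientAddGroup.equivIcoMod (one_pos) (0:ℝ) x).2
  simpa [cpos] using this

lemma cpos_inj {x y : Circ} (h : cpos x = cpos y) : x = y := by
  rw [← cpos_coe_eq x, ← cpos_coe_eq y, h]

lemma cpos_of_coe {t : ℝ} (h : t ∈ Set.Ico (0:ℝ) 1) : cpos (t : Circ) = t := by
  have h' : t ∈ Set.Ico (0:ℝ) (0+1) := by simpa using h
  simp only [cpos, QuotientAddGroup.equivIcoMod_coe]
  exact (toIcoMod_eq_self one_pos).2 h'

lemma toIcoMod_val {A B : ℝ} (hA : A ∈ Set.Ico (0:ℝ) 1) (hB : B ∈ Set.Ico (0:ℝ) 1) :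
    toIcoMod one_pos A B = if B < A then B + 1 else B := by
  obtain ⟨hA0, hA1⟩ := hA; obtain ⟨hB0, hB1⟩ := hB
  split_ifs with h
  · rw [← toIcoMod_add_right one_pos A B]
    exact (toIcoMod_eq_self one_pos).2 ⟨by linarith, by linarith⟩
  · exact (toIcoMod_eq_self one_pos).2 ⟨by linarith, by linarith⟩

lemma toIocMod_val {A B : ℝ} (hA : A ∈ Set.Ico (0:ℝ) 1) (hB : B ∈ Set.Ico (0:ℝ) 1) :
    toIocMod one_pos A B = if B ≤ A then B + 1 else B := by
  obtain ⟨hA0, hA1⟩ := hA; obtain ⟨hB0, hB1⟩ := hB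
  split_ifs with h
  · rw [← toIocMod_add_right one_pos A B]
    exact (toIocMod_eq_self one_pos).2 ⟨by linarith, by linarith⟩
  · exact (toIocMod_eq_self one_pos).2 ⟨by linarith, by linarith⟩

lemma btw_iff_real (x y z : Circ) :
    btw x y z ↔ ((if cpos y < cpos x then cpos y + 1 else cpos y) ≤
      (if cpos z ≤ cpos x then cpos z + 1 else cpos z)) := by
  conv_lhs => rw [← cpos_coe_eq x, ← cpos_coe_eq y, ← cpos_coe_eq z]
  rw [QuotientAddGroup.btw_coe_iff,
    toIcoMod_val (cpos_mem x) (cpos_mem y), toIocMod_val (cpos_mem x) (cpos_mem z)]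

/-- Strict cyclic order on reals. -/
def cyc (x y z : ℝ) : Prop := (x < y ∧ y < z) ∨ (y < z ∧ z < x) ∨ (z < x ∧ x < y)

lemma sbtw_iff_cyc (x y z : Circ) : sbtw x y z ↔ cyc (cpos x) (cpos y) (cpos z) := by
  rw [sbtw_iff_btw_not_btw, btw_iff_real, btw_iff_real]
  obtain ⟨hx0, hx1⟩ := cpos_mem x
  obtain ⟨hy0, hy1⟩ := cpos_mem y
  obtain ⟨hz0, hz1⟩ := cpos_mem z
  unfold cyc
  split_ifs <;> constructor
  all_goals
    first
      | (rintro ⟨h1, h2⟩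
         rw [not_le] at h2
         first
           | (left; constructor <;> linarith)
           | (right; left; constructor <;> linarith)
           | (right; right; constructor <;> linarith)
           | linarith)
      | (rintro (⟨h1, h2⟩ | ⟨h1, h2⟩ | ⟨h1, h2⟩) <;>
          exact ⟨by linarith, not_le.2 (by linarith)⟩)

lemma cyc_total {a b x : ℝ} (hab : a ≠ b) (hxa : x ≠ a) (hxb : x ≠ b) :
    cyc a x b ∨ cyc b x a := by
  unfold cyc
  rcases lt_trichotomy a b with h | h | h <;> rcases lt_trichotomy x a with h' | h' | h' <;>
    rcases lt_trichotomy x b with h'' | h'' | h'' <;> simp_all <;> tauto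

lemma cyc_asymm {a b x : ℝ} (h : cyc a x b) : ¬ cyc b x a := by
  unfold cyc at *
  rintro (⟨_,_⟩|⟨_,_⟩|⟨_,_⟩) <;> rcases h with (⟨_,_⟩|⟨_,_⟩|⟨_,_⟩) <;> linarith

lemma cycG2 {a b c d x y : ℝ} (h1 : cyc a c b) (h2 : cyc a d b) (h3 : cyc b x a)
    (h4 : cyc b y a) : cyc c x d ↔ cyc c y d := by
  unfold cyc at *
  rcases h1 with (⟨_,_⟩|⟨_,_⟩|⟨_,_⟩) <;> rcases h2 with (⟨_,_⟩|⟨_,_⟩|⟨_,_⟩) <;>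
    rcases h3 with (⟨_,_⟩|⟨_,_⟩|⟨_,_⟩) <;> rcases h4 with (⟨_,_⟩|⟨_,_⟩|⟨_,_⟩) <;>
    constructor <;>
    rintro (⟨_,_⟩|⟨_,_⟩|⟨_,_⟩) <;>
    first
      | (left; exact ⟨by linarith, by linarith⟩)
      | (right; left; exact ⟨by linarith, by linarith⟩)
      | (right; right; exact ⟨by linarith, by linarith⟩)
      | (exfalso; linarith)

lemma cycG3 {u v c d t : ℝ} (h1 : cyc u c v) (h2 : cyc u d v) (h3 : cyc v t u)
    (h4 : cyc c u d) (h5 : cyc c v d) (h6 : cyc d t c) : False := by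
  unfold cyc at *
  rcases h1 with (⟨_,_⟩|⟨_,_⟩|⟨_,_⟩) <;> rcases h2 with (⟨_,_⟩|⟨_,_⟩|⟨_,_⟩) <;>
    rcases h3 with (⟨_,_⟩|⟨_,_⟩|⟨_,_⟩) <;> rcases h4 with (⟨_,_⟩|⟨_,_⟩|⟨_,_⟩) <;>
    rcases h5 with (⟨_,_⟩|⟨_,_⟩|⟨_,_⟩) <;> rcases h6 with (⟨_,_⟩|⟨_,_⟩|⟨_,_⟩) <;>
    linarith

end AuxCirc

namespace CircleRep

variable {V : Type} {G : SimpleGraph V} (R : CircleRep V G)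

/-- First endpoint of the arc `s` of the chord of `v`. -/
def ep1 (v : V) (s : Bool) : Circ := if s then R.p v else R.q v

/-- Second endpoint of the arc `s` of the chord of `v`. -/
def ep2 (v : V) (s : Bool) : Circ := if s then R.q v else R.p v

lemma arcSet_eq (v : V) (s : Bool) :
    R.ArcSet v s = {x | sbtw (R.ep1 v s) x (R.ep2 v s)} := by
  cases s <;> simp [ArcSet, ep1, ep2]

lemma ep1_not (v : V) (s : Bool) : R.ep1 v (!s) = R.ep2 v s := by
  cases s <;> rfl

lemma ep2_not (v : V) (s : Bool) : R.ep2 v (!s) = R.ep1 v s := by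
  cases s <;> rfl

lemma ep1_cases (v : V) (s : Bool) : R.ep1 v s = R.p v ∨ R.ep1 v s = R.q v := by
  cases s <;> simp [ep1]

lemma ep2_cases (v : V) (s : Bool) : R.ep2 v s = R.p v ∨ R.ep2 v s = R.q v := by
  cases s <;> simp [ep2]

variable {R}

lemma ne_pq (v w : V) : R.p v ≠ R.q w := fun h => by
  simpa using R.inj (show Sum.elim R.p R.q (Sum.inl v) = Sum.elim R.p R.q (Sum.inr w) from h)

lemma ne_pp {u v : V} (h : u ≠ v) : R.p u ≠ R.p v := fun h' => by
  have := R.inj (show Sum.elim R.p R.q (Sum.inl u) = Sum.elim R.p R.q (Sum.inl v) from h')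
  simp only [Sum.inl.injEq] at this
  exact h this

lemma ne_qq {u v : V} (h : u ≠ v) : R.q u ≠ R.q v := fun h' => by
  have := R.inj (show Sum.elim R.p R.q (Sum.inr u) = Sum.elim R.p R.q (Sum.inr v) from h')
  simp only [Sum.inr.injEq] at this
  exact h this

lemma ne_qp (v w : V) : R.q v ≠ R.p w := (ne_pq w v).symm

lemma ne_ep (v w : V) (s : Bool) : R.ep1 v s ≠ R.ep2 v s := by
  cases s <;> simp [ep1, ep2, ne_pq, ne_qp]

/-- A chord not crossing the chord of `a` lies entirely in one arc of `a`. -/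
lemma chord_side {a b : V} (hab : a ≠ b) (hnadj : ¬ G.Adj a b) :
    ∃ s, R.p b ∈ R.ArcSet a s ∧ R.q b ∈ R.ArcSet a s := by
  have hnadj' : ¬ G.Adj b a := fun h => hnadj h.symm
  rw [R.adj b a] at hnadj'
  push_neg at hnadj'
  have hx := hnadj' hab.symm
  have htot : ∀ x : Circ, x ≠ R.p a → x ≠ R.q a →
      sbtw (R.p a) x (R.q a) ∨ sbtw (R.q a) x (R.p a) := by
    intro x h1 h2
    have := cyc_total (a := cpos (R.p a)) (b := cpos (R.q a)) (x := cpos x)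
      (fun h => ne_pq a a (cpos_inj h)) (fun h => h1 (cpos_inj h)) (fun h => h2 (cpos_inj h))
    rcases this with h | h
    · exact Or.inl ((sbtw_iff_cyc _ _ _).2 h)
    · exact Or.inr ((sbtw_iff_cyc _ _ _).2 h)
  have hdisj : ∀ x : Circ, sbtw (R.q a) x (R.p a) → ¬ sbtw (R.p a) x (R.q a) := by
    intro x h h'
    exact cyc_asymm ((sbtw_iff_cyc _ _ _).1 h) ((sbtw_iff_cyc _ _ _).1 h')
  have hmemT : ∀ x : Circ, sbtw (R.p a) x (R.q a) → x ∈ R.ArcSet a true := by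
    intro x h; simp [ArcSet]; exact h
  have hmemF : ∀ x : Circ, sbtw (R.q a) x (R.p a) → x ∈ R.ArcSet a false := by
    intro x h; simp [ArcSet]; exact h
  have hpb := htot (R.p b) (ne_pp hab.symm) (ne_pq b a)
  have hqb := htot (R.q b) (ne_qp b a) (ne_qq hab.symm)
  rcases hpb with h1 | h1 <;> rcases hqb with h2 | h2
  · exact ⟨true, hmemT _ h1, hmemT _ h2⟩
  · exact absurd (Or.inl ⟨h1, hdisj _ h2⟩) hx
  · exact absurd (Or.inr ⟨h2, hdisj _ h1⟩) hx
  · exact ⟨false, hmemF _ h1, hmemF _ h2⟩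

/-- Chords lying in opposite arcs of the chord of `a` do not cross. -/
lemma no_cross {a u v : V} {s : Bool}
    (hu1 : R.p u ∈ R.ArcSet a s) (hu2 : R.q u ∈ R.ArcSet a s)
    (hv1 : R.p v ∈ R.ArcSet a (!s)) (hv2 : R.q v ∈ R.ArcSet a (!s)) : ¬ G.Adj u v := by
  intro h
  obtain ⟨-, hxor⟩ := (R.adj u v).1 h
  rw [R.arcSet_eq] at hu1 hu2 hv1 hv2
  rw [R.ep1_not, R.ep2_not] at hv1 hv2
  have hiff := cycG2 ((sbtw_iff_cyc _ _ _).1 hv1) ((sbtw_iff_cyc _ _ _).1 hv2)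
      ((sbtw_iff_cyc _ _ _).1 hu1) ((sbtw_iff_cyc _ _ _).1 hu2)
  rw [sbtw_iff_cyc, sbtw_iff_cyc] at hxor
  rcases hxor with ⟨h1, h2⟩ | ⟨h1, h2⟩
  · exact h2 (hiff.1 h1)
  · exact h2 (hiff.2 h1)

/-- For a vertex `a` of an asteroidal set `A`, all chords of `A \ {a}` lie in a
common arc of the chord of `a`. -/
lemma exists_side {A : Finset V} (hA : IsAsteroidal G ↑A) {a : V} (ha : a ∈ A) :
    ∃ s : Bool, ∀ b ∈ A, b ≠ a → R.p b ∈ R.ArcSet a s ∧ R.q b ∈ R.ArcSet a s := by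
  classical
  by_cases hex : ∃ b ∈ A, b ≠ a
  · obtain ⟨b0, hb0A, hb0⟩ := hex
    obtain ⟨hx0, -, -⟩ := hA a (by simpa using ha) b0 (by simpa using hb0A) b0
      (by simpa using hb0A) hb0 hb0
    obtain ⟨s, hs1, hs2⟩ := chord_side (Ne.symm hx0.1) hx0.2
    refine ⟨s, fun b hbA hbne => ?_⟩
    obtain ⟨hx, hy, hr⟩ := hA a (by simpa using ha) b0 (by simpa using hb0A) b
      (by simpa using hbA) hb0 hbne
    obtain ⟨w⟩ := hr
    have key : ∀ (z1 z2 : ↥{w | w ≠ a ∧ ¬ G.Adj a w})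
        (_ : (G.induce {w | w ≠ a ∧ ¬ G.Adj a w}).Walk z1 z2),
        (R.p ↑z1 ∈ R.ArcSet a s ∧ R.q ↑z1 ∈ R.ArcSet a s) →
        (R.p ↑z2 ∈ R.ArcSet a s ∧ R.q ↑z2 ∈ R.ArcSet a s) := by
      intro z1 z2 pth
      induction pth with
      | nil => exact id
      | @cons x y z hadj pth ih =>
        intro h1
        apply ih
        have hGadj : G.Adj ↑x ↑y := hadj
        obtain ⟨s', hs1', hs2'⟩ := chord_side (Ne.symm y.2.1) y.2.2
        by_cases hss : s' = s
        · rw [hss] at hs1' hs2'; exact ⟨hs1', hs2'⟩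
        · exfalso
          have hss' : s' = !s := by cases s <;> cases s' <;> simp_all
          rw [hss'] at hs1' hs2'
          exact no_cross h1.1 h1.2 hs1' hs2' hGadj
    exact key ⟨b0, hx⟩ ⟨b, hy⟩ w ⟨hs1, hs2⟩
  · push_neg at hex
    exact ⟨true, fun b hb hne => absurd (hex b hb) hne⟩

/-- The central counting lemma: an asteroidal set is no bigger than any set of
good corners. -/
lemma card_le_of_good {T : Finset Circ} (hT : R.GoodCorners T) {A : Finset V}
    (hA : IsAsteroidal G ↑A) : A.card ≤ T.card := by
  classical
  have hside0 : ∀ a : V, a ∈ A → ∃ s : Bool, ∀ b ∈ A, b ≠ a →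
      R.p b ∈ R.ArcSet a s ∧ R.q b ∈ R.ArcSet a s := fun a ha => exists_side hA ha
  choose! side hside using hside0
  have hcor : ∀ a : V, ∃ t, t ∈ T ∧ t ∈ R.ArcSet a (!(side a)) := by
    intro a
    cases hsa : side a
    · obtain ⟨t, ht, h⟩ := (hT.2 a).1
      exact ⟨t, ht, by simpa using h⟩
    · obtain ⟨t, ht, h⟩ := (hT.2 a).2
      exact ⟨t, ht, by simpa using h⟩
  choose corner hcT hcArc using hcor
  apply Finset.card_le_card_of_injOn corner (fun a _ => hcT a)
  intro a haA b hbA heq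
  by_contra hne
  have haA' : a ∈ A := by simpa using haA
  have hbA' : b ∈ A := by simpa using hbA
  have hBa := hside a haA' b hbA' (Ne.symm hne)
  have hAb := hside b hbA' a haA' hne
  have hchB : ∀ x : Circ, (x = R.p b ∨ x = R.q b) → x ∈ R.ArcSet a (side a) := by
    rintro x (rfl | rfl); exacts [hBa.1, hBa.2]
  have hchA : ∀ x : Circ, (x = R.p a ∨ x = R.q a) → x ∈ R.ArcSet b (side b) := by
    rintro x (rfl | rfl); exacts [hAb.1, hAb.2]
  have H1 : sbtw (R.ep1 a (side a)) (R.ep1 b (side b)) (R.ep2 a (side a)) := by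
    have := hchB _ (R.ep1_cases b (side b)); rwa [R.arcSet_eq] at this
  have H2 : sbtw (R.ep1 a (side a)) (R.ep2 b (side b)) (R.ep2 a (side a)) := by
    have := hchB _ (R.ep2_cases b (side b)); rwa [R.arcSet_eq] at this
  have H3 : sbtw (R.ep2 a (side a)) (corner a) (R.ep1 a (side a)) := by
    have := hcArc a; rw [R.arcSet_eq, R.ep1_not, R.ep2_not] at this; exact this
  have H4 : sbtw (R.ep1 b (side b)) (R.ep1 a (side a)) (R.ep2 b (side b)) := by
    have := hchA _ (R.ep1_cases a (side a)); rwa [R.arcSet_eq] at this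
  have H5 : sbtw (R.ep1 b (side b)) (R.ep2 a (side a)) (R.ep2 b (side b)) := by
    have := hchA _ (R.ep2_cases a (side a)); rwa [R.arcSet_eq] at this
  have H6 : sbtw (R.ep2 b (side b)) (corner a) (R.ep1 b (side b)) := by
    have := hcArc b; rw [R.arcSet_eq, R.ep1_not, R.ep2_not, ← heq] at this; exact this
  exact cycG3 ((sbtw_iff_cyc _ _ _).1 H1) ((sbtw_iff_cyc _ _ _).1 H2)
    ((sbtw_iff_cyc _ _ _).1 H3) ((sbtw_iff_cyc _ _ _).1 H4)
    ((sbtw_iff_cyc _ _ _).1 H5) ((sbtw_iff_cyc _ _ _).1 H6)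

/-- Every circle representation of a finite graph admits some finite set of good
corners. -/
lemma exists_good [Fintype V] (R : CircleRep V G) : ∃ T : Finset Circ, R.GoodCorners T := by
  classical
  set E : Finset ℝ := (Finset.univ.image fun v : V => cpos (R.p v)) ∪
    (Finset.univ.image fun v : V => cpos (R.q v)) with hE
  have hpt : ∀ (v : V) (s : Bool), ∃ x : Circ, x ∈ R.ArcSet v s ∧ cpos x ∉ E := by
    intro v s
    have hne : cpos (R.ep1 v s) ≠ cpos (R.ep2 v s) := fun h => R.ne_ep v v s (cpos_inj h)
    obtain ⟨hα0, hα1⟩ := cpos_mem (R.ep1 v s)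
    obtain ⟨hβ0, hβ1⟩ := cpos_mem (R.ep2 v s)
    set α := cpos (R.ep1 v s); set β := cpos (R.ep2 v s)
    have hI : ∃ t : ℝ, t ∈ Set.Ico (0:ℝ) 1 ∧ cyc α t β ∧ t ∉ (E : Set ℝ) := by
      rcases lt_or_gt_of_ne hne with h | h
      · obtain ⟨t, ht⟩ := ((Set.Ioo_infinite h).diff (E.finite_toSet)).nonempty
        obtain ⟨h1, h2⟩ := ht.1
        exact ⟨t, Set.mem_Ico.2 ⟨by linarith, by linarith⟩, Or.inl ⟨h1, h2⟩, ht.2⟩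
      · obtain ⟨t, ht⟩ := ((Set.Ioo_infinite hα1).diff (E.finite_toSet)).nonempty
        obtain ⟨h1, h2⟩ := ht.1
        exact ⟨t, Set.mem_Ico.2 ⟨by linarith, by linarith⟩, Or.inr (Or.inr ⟨h, h1⟩), ht.2⟩
    obtain ⟨t, htI, htcyc, htE⟩ := hI
    refine ⟨(t : Circ), ?_, ?_⟩
    · rw [R.arcSet_eq]
      exact (sbtw_iff_cyc _ _ _).2 (by rwa [cpos_of_coe htI])
    · rwa [cpos_of_coe htI]
  choose pt hptArc hptE using hpt
  refine ⟨Finset.image (fun vs : V × Bool => pt vs.1 vs.2) Finset.univ, ?_, ?_⟩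
  · intro t ht v
    obtain ⟨⟨u, s⟩, -, rfl⟩ := Finset.mem_image.1 ht
    constructor
    · intro h
      apply hptE u s
      rw [h, hE]
      simp only [Finset.mem_union, Finset.mem_image]
      exact Or.inl ⟨v, Finset.mem_univ v, rfl⟩
    · intro h
      apply hptE u s
      rw [h, hE]
      simp only [Finset.mem_union, Finset.mem_image]
      exact Or.inr ⟨v, Finset.mem_univ v, rfl⟩
  · intro v
    constructor
    · exact ⟨pt v true, Finset.mem_image.2 ⟨(v, true), Finset.mem_univ _, rfl⟩, hptArc v true⟩
    · exact ⟨pt v false, Finset.mem_image.2 ⟨(v, false), Finset.mem_univ _, rfl⟩, hptArc v false⟩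

end CircleRep

/-- for any circle graph `G`, `ψ(G) ≥ an(G)`. -/
theorem stmt11 {V : Type} [Fintype V] (G : SimpleGraph V)
    (hcirc : Nonempty (CircleRep V G)) :
    asteroidalNumber G ≤ polygonNumber G := by
  obtain ⟨R⟩ := hcirc
  obtain ⟨T0, hT0⟩ := CircleRep.exists_good R
  have hPne : {k | ∃ R' : CircleRep V G, ∃ T : Finset Circ,
      T.card = k ∧ R'.GoodCorners T}.Nonempty := ⟨T0.card, R, T0, rfl, hT0⟩
  obtain ⟨R', T', hcard, hgood⟩ := Nat.sInf_mem hPne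
  have hub : ∀ n ∈ {n | ∃ A : Finset V, IsAsteroidal G ↑A ∧ A.card = n},
      n ≤ polygonNumber G := by
    rintro n ⟨A, hAast, rfl⟩
    calc A.card ≤ T'.card := R'.card_le_of_good hgood hAast
      _ = polygonNumber G := hcard
  exact csSup_le' hub
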